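/- Let a ∈ ℝ, let I ⊆ ℝ be an interval containing 0, and let y, z : ℝ → ℝ be twice differentiable on I with y''(s) = (1 − 2·y(s)² − 8·z(s)²)·y(s), z''(s) = (4 − 2·y(s)² − 8·z(s)²)·z(s) on I, and initial conditions y(0) = 0, y'(0) = 2a, z(0) = a, z'(0) = 0. Then for all s ∈ I: (y(s)² + 4·z(s)²)² − y(s)² − 16·z(s)² + y'(s)² + 4·z'(s)² = −4a²·(3 − 4a²), and 12·z(s)²·(z(s)² − 1) + 3·y(s)²·z(s)² + z(s)²·y'(s)² − 2·y(s)·y'(s)·z(s)·z'(s) + (3 + y(s)²)·z'(s)² = −4a²·(3 − 4a²). -/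

import Mathlib

/-- A function with zero derivative at every point of a convex set is constant on it. -/
lemma egj_const_of_hasDerivAt_zero {s : Set ℝ} (hs : Convex ℝ s) {F : ℝ → ℝ}
    (hF : ∀ x ∈ s, HasDerivAt F 0 x) {x y : ℝ} (hx : x ∈ s) (hy : y ∈ s) :
    F x = F y := by
  have hF' : ∀ x ∈ s, HasFDerivWithinAt F (0 : ℝ →L[ℝ] ℝ) s x := by
    intro t ht
    have h := ((hF t ht).hasDerivWithinAt (s := s)).hasFDerivWithinAt
    have h0eq : (ContinuousLinearMap.toSpanSingleton ℝ (0 : ℝ)) = 0 := by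
      ext; simp
    rwa [h0eq] at h
  have bound : ∀ t ∈ s, ‖(0 : ℝ →L[ℝ] ℝ)‖ ≤ 0 := by simp
  have := hs.norm_image_sub_le_of_norm_hasFDerivWithin_le
    (f' := fun _ => (0 : ℝ →L[ℝ] ℝ)) hF' bound hx hy
  simp only [zero_mul, norm_le_zero_iff, sub_eq_zero] at this
  exact this.symm

/-- **Values of the first integrals along EGJ solutions with the EGJ initial data.**
If `y, z` solve the EGJ system on an interval `I ∋ 0` with `y(0) = 0`, `y'(0) = 2a`,
`z(0) = a`, `z'(0) = 0`, then both first integrals are identically equal to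
`−4a²(3 − 4a²)` on `I`. -/
theorem egj_first_integrals_value
    (a : ℝ) (I : Set ℝ) (hI : I.OrdConnected) (h0 : (0 : ℝ) ∈ I)
    (y z y' z' y'' z'' : ℝ → ℝ)
    (hy : ∀ s ∈ I, HasDerivAt y (y' s) s)
    (hy' : ∀ s ∈ I, HasDerivAt y' (y'' s) s)
    (hz : ∀ s ∈ I, HasDerivAt z (z' s) s)
    (hz' : ∀ s ∈ I, HasDerivAt z' (z'' s) s)
    (hODEy : ∀ s ∈ I, y'' s = (1 - 2 * (y s) ^ 2 - 8 * (z s) ^ 2) * y s)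
    (hODEz : ∀ s ∈ I, z'' s = (4 - 2 * (y s) ^ 2 - 8 * (z s) ^ 2) * z s)
    (hy0 : y 0 = 0) (hy'0 : y' 0 = 2 * a) (hz0 : z 0 = a) (hz'0 : z' 0 = 0) :
    ∀ s ∈ I,
      ((y s) ^ 2 + 4 * (z s) ^ 2) ^ 2 - (y s) ^ 2 - 16 * (z s) ^ 2
          + (y' s) ^ 2 + 4 * (z' s) ^ 2 = -(4 * a ^ 2 * (3 - 4 * a ^ 2)) ∧
      12 * (z s) ^ 2 * ((z s) ^ 2 - 1) + 3 * (y s) ^ 2 * (z s) ^ 2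
          + (z s) ^ 2 * (y' s) ^ 2 - 2 * y s * y' s * z s * z' s
          + (3 + (y s) ^ 2) * (z' s) ^ 2 = -(4 * a ^ 2 * (3 - 4 * a ^ 2)) := by
  have hconv : Convex ℝ I := hI.convex
  set F1 : ℝ → ℝ := fun t =>
    ((y t) ^ 2 + 4 * (z t) ^ 2) ^ 2 - (y t) ^ 2 - 16 * (z t) ^ 2
      + (y' t) ^ 2 + 4 * (z' t) ^ 2 with hF1
  set F2 : ℝ → ℝ := fun t =>
    12 * (z t) ^ 2 * ((z t) ^ 2 - 1) + 3 * (y t) ^ 2 * (z t) ^ 2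
      + (z t) ^ 2 * (y' t) ^ 2 - 2 * y t * y' t * z t * z' t
      + (3 + (y t) ^ 2) * (z' t) ^ 2 with hF2
  have hD1 : ∀ s ∈ I, HasDerivAt F1 0 s := by
    intro s hs
    have Hy := hy s hs; have Hy' := hy' s hs
    have Hz := hz s hs; have Hz' := hz' s hs
    have H := ((((((Hy.pow 2).add ((Hz.pow 2).const_mul 4)).pow 2).sub
      (Hy.pow 2)).sub ((Hz.pow 2).const_mul 16)).add (Hy'.pow 2)).add
      ((Hz'.pow 2).const_mul 4)
    refine H.congr_deriv ?_
    rw [hODEy s hs, hODEz s hs]; simp only [Pi.add_apply, Pi.mul_apply, Pi.pow_apply]; push_cast; ring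
  have hD2 : ∀ s ∈ I, HasDerivAt F2 0 s := by
    intro s hs
    have Hy := hy s hs; have Hy' := hy' s hs
    have Hz := hz s hs; have Hz' := hz' s hs
    have A1 := ((Hz.pow 2).const_mul 12).mul ((Hz.pow 2).sub_const 1)
    have A2 := ((Hy.pow 2).const_mul 3).mul (Hz.pow 2)
    have A3 := (Hz.pow 2).mul (Hy'.pow 2)
    have A4 := (((Hy.const_mul 2).mul Hy').mul Hz).mul Hz'
    have A5 := ((Hy.pow 2).const_add 3).mul (Hz'.pow 2)
    have H := (((A1.add A2).add A3).sub A4).add A5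
    refine H.congr_deriv ?_
    rw [hODEy s hs, hODEz s hs]; simp only [Pi.add_apply, Pi.mul_apply, Pi.pow_apply]; push_cast; ring
  intro s hs
  have e1 : F1 s = F1 0 := egj_const_of_hasDerivAt_zero hconv hD1 hs h0
  have e2 : F2 s = F2 0 := egj_const_of_hasDerivAt_zero hconv hD2 hs h0
  constructor
  · rw [show (((y s) ^ 2 + 4 * (z s) ^ 2) ^ 2 - (y s) ^ 2 - 16 * (z s) ^ 2
        + (y' s) ^ 2 + 4 * (z' s) ^ 2) = F1 s from rfl, e1]
    simp only [hF1, hy0, hy'0, hz0, hz'0]; ring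
  · rw [show (12 * (z s) ^ 2 * ((z s) ^ 2 - 1) + 3 * (y s) ^ 2 * (z s) ^ 2
        + (z s) ^ 2 * (y' s) ^ 2 - 2 * y s * y' s * z s * z' s
        + (3 + (y s) ^ 2) * (z' s) ^ 2) = F2 s from rfl, e2]
    simp only [hF2, hy0, hy'0, hz0, hz'0]; ring
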